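/- Let s ≥ 1 be a natural number dividing W. Then for every x ∈ U and all indices i ≤ j ≤ W, the rounded-window frequencies sandwich the interval frequency: f_x^j + f_x^{s·⌊i/s⌋} ≤ f_x^{s·⌈j/s⌉} + f_x^i, and f_x^{s·⌈j/s⌉} + f_x^i ≤ f_x^j + f_x^{s·⌊i/s⌋} + 2s. (Equivalently, f_x^{s·⌈j/s⌉} − f_x^{s·⌊i/s⌋} − 2s ≤ f_x^{i,j} ≤ f_x^{s·⌈j/s⌉} − f_x^{s·⌊i/s⌋}.) -/

import Mathlib

/-- The `w`-frequency of `x`: the number of occurrences of `x` among the last `w`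
elements of the stream `S`. -/
def freq {U : Type*} [DecidableEq U] (S : List U) (x : U) (w : ℕ) : ℕ :=
  (S.drop (S.length - w)).count x

lemma freq_mono {U : Type*} [DecidableEq U] (S : List U) (x : U) {w w' : ℕ}
    (h : w ≤ w') : freq S x w ≤ freq S x w' := by
  unfold freq
  have hd : S.drop (S.length - w) =
      (S.drop (S.length - w')).drop ((S.length - w) - (S.length - w')) := by
    rw [List.drop_drop]
    congr 1
    omega
  rw [hd]
  exact (List.drop_sublist _ _).count_le x

lemma freq_le_add {U : Type*} [DecidableEq U] (S : List U) (x : U) {w w' : ℕ}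
    (h : w ≤ w') : freq S x w' ≤ freq S x w + (w' - w) := by
  unfold freq
  set a := S.length - w' with ha
  set b := S.length - w with hb
  have hab : a ≤ b := by omega
  have hd : (S.drop a).drop (b - a) = S.drop b := by
    rw [List.drop_drop, Nat.add_sub_cancel' hab]
  have : S.drop a = (S.drop a).take (b - a) ++ S.drop b := by
    rw [← hd]
    exact (List.take_append_drop _ _).symm
  calc (S.drop a).count x
      = ((S.drop a).take (b - a)).count x + (S.drop b).count x := by
        rw [this, List.count_append]; simp [← this]
    _ ≤ (b - a) + (S.drop b).count x := by
        have : ((S.drop a).take (b - a)).count x ≤ ((S.drop a).take (b - a)).length :=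
          List.count_le_length
        have hl : ((S.drop a).take (b - a)).length ≤ b - a := by
          simp [List.length_take]
        omega
    _ ≤ (S.drop b).count x + (w' - w) := by omega

theorem freq_rounded_sandwich {U : Type*} [DecidableEq U]
    (W s : ℕ) (hs : 1 ≤ s) (hsW : s ∣ W) (S : List U) (hS : S.length = W) (x : U)
    (i j : ℕ) (hij : i ≤ j) (hjW : j ≤ W) :
    freq S x j + freq S x (s * (i / s)) ≤ freq S x (s * (j ⌈/⌉ s)) + freq S x i ∧
    freq S x (s * (j ⌈/⌉ s)) + freq S x i ≤
      freq S x j + freq S x (s * (i / s)) + 2 * s := by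
  have h1 : s * (i / s) ≤ i := Nat.mul_div_le i s
  have h2 : j ≤ s * (j ⌈/⌉ s) := by
    exact (ceilDiv_le_iff_le_mul hs).1 le_rfl
  have h3 : i ≤ s * (i / s) + s := by
    have h := Nat.div_add_mod i s
    have h' : i % s < s := Nat.mod_lt i hs
    omega
  have h4 : s * (j ⌈/⌉ s) ≤ j + s := by
    rw [Nat.ceilDiv_eq_add_pred_div]
    calc s * ((j + s - 1) / s) ≤ j + s - 1 := Nat.mul_div_le _ s
      _ ≤ j + s := by omega
  constructor
  · exact Nat.add_le_add (freq_mono S x h2) (freq_mono S x h1)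
  · have a1 : freq S x (s * (j ⌈/⌉ s)) ≤ freq S x j + (s * (j ⌈/⌉ s) - j) :=
      freq_le_add S x h2
    have a2 : freq S x i ≤ freq S x (s * (i / s)) + (i - s * (i / s)) :=
      freq_le_add S x h1
    omega
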